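/- Let M be an n×n complex matrix that is k-spectrally monomorphic. Then M is l-spectrally monomorphic for every l ∈ {1, ..., min(k, n−k)}. -/
import Mathlib


open Polynomial Matrix

private lemma derivFinsetProd {ι : Type*} [DecidableEq ι] (s : Finset ι) (f : ι → Polynomial ℂ) :
    derivative (∏ i ∈ s, f i) = ∑ i ∈ s, (∏ j ∈ s.erase i, f j) * derivative (f i) := by
  induction s using Finset.induction with
  | empty => simp
  | @insert a s ha ih =>
    rw [Finset.prod_insert ha, derivative_mul, ih, Finset.sum_insert ha,
      Finset.erase_insert ha, Finset.mul_sum, mul_comm (derivative (f a))]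
    congr 1
    apply Finset.sum_congr rfl
    intro i hi
    rw [Finset.erase_insert_of_ne (by rintro rfl; exact ha hi),
      Finset.prod_insert (fun h => ha (Finset.erase_subset _ _ h)), mul_assoc]

private lemma derivDet {s : ℕ} (B : Matrix (Fin s) (Fin s) (Polynomial ℂ)) :
    derivative B.det = ∑ j, (B.updateCol j fun i => derivative (B i j)).det := by
  rw [Matrix.det_apply, map_sum]
  simp_rw [Units.smul_def, map_zsmul, derivFinsetProd, Finset.smul_sum]
  rw [Finset.sum_comm]
  refine Finset.sum_congr rfl fun j _ => ?_
  rw [Matrix.det_apply]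
  refine Finset.sum_congr rfl fun σ _ => ?_
  congr 1
  rw [← Finset.mul_prod_erase Finset.univ _ (Finset.mem_univ j), Matrix.updateCol_self,
    mul_comm (derivative (B (σ j) j))]
  congr 1
  apply Finset.prod_congr rfl
  intro i hi
  rw [Matrix.updateCol_ne (Finset.ne_of_mem_erase hi)]

private lemma charmatrixSub {n m : ℕ} {f : Fin m → Fin n} (hf : Function.Injective f)
    (A : Matrix (Fin n) (Fin n) ℂ) :
    charmatrix (A.submatrix f f) = (charmatrix A).submatrix f f := by
  apply Matrix.ext
  intro i j
  by_cases h : i = j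
  · subst h; simp [charmatrix_apply]
  · simp [charmatrix_apply_ne _ _ _ h, charmatrix_apply_ne _ _ _ (fun hc => h (hf hc))]

private lemma derivCharpoly {m : ℕ} (A : Matrix (Fin (m+1)) (Fin (m+1)) ℂ) :
    derivative A.charpoly = ∑ i : Fin (m+1), (A.submatrix i.succAbove i.succAbove).charpoly := by
  rw [Matrix.charpoly, derivDet]
  refine Finset.sum_congr rfl fun j _ => ?_
  have hcol : (fun i => derivative (charmatrix A i j)) = fun i => if i = j then 1 else 0 := by
    funext i
    by_cases h : i = j
    · subst h; rw [charmatrix_apply_eq]; simp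
    · rw [charmatrix_apply_ne _ _ _ h]; simp [if_neg h]
  rw [hcol, Matrix.det_succ_column _ j, Finset.sum_eq_single j]
  · rw [Matrix.updateCol_self, if_pos rfl, Matrix.submatrix_updateCol_succAbove,
      Even.neg_one_pow (Even.add_self _), one_mul, one_mul, Matrix.charpoly,
      charmatrixSub (Fin.succAbove_right_injective)]
  · intro i _ hij
    rw [Matrix.updateCol_self, if_neg hij, mul_zero, zero_mul]
  · intro h; exact absurd (Finset.mem_univ j) h

private lemma bridge {n m m' : ℕ} (M : Matrix (Fin n) (Fin n) ℂ) {f : Fin m → Fin n}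
    {g : Fin m' → Fin n} (hf : Function.Injective f) (hg : Function.Injective g)
    (h : Finset.image f Finset.univ = Finset.image g Finset.univ) :
    (M.submatrix f f).charpoly = (M.submatrix g g).charpoly := by
  have hmm : m = m' := by
    have h1 := Finset.card_image_of_injective Finset.univ hf
    have h2 := Finset.card_image_of_injective Finset.univ hg
    rw [h] at h1
    simpa [h2] using h1.symm
  have h0 : ∀ i, ∃ j, g j = f i := by
    intro i
    have : f i ∈ Finset.image g Finset.univ := by
      rw [← h]; exact Finset.mem_image_of_mem f (Finset.mem_univ i)
    obtain ⟨j, _, hj⟩ := Finset.mem_image.mp this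
    exact ⟨j, hj⟩
  choose e he using h0
  have hei : Function.Injective e := fun i i' hii => hf (by rw [← he, ← he, hii])
  have heb : Function.Bijective e := by
    rw [Fintype.bijective_iff_injective_and_card]
    exact ⟨hei, by simp [hmm]⟩
  let E := Equiv.ofBijective e heb
  have h1 : M.submatrix f f = (M.submatrix g g).submatrix E E := by
    apply Matrix.ext
    intro i j
    simp [Matrix.submatrix_apply, E, Equiv.ofBijective, he]
  have h2 : (M.submatrix g g).submatrix E E = Matrix.reindex E.symm E.symm (M.submatrix g g) := by
    rw [Matrix.reindex_apply]
    simp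
  rw [h1, h2, Matrix.charpoly_reindex]

noncomputable def qc {n : ℕ} (M : Matrix (Fin n) (Fin n) ℂ) (S : Finset (Fin n)) : Polynomial ℂ :=
  (M.submatrix (S.orderEmbOfFin rfl) (S.orderEmbOfFin rfl)).charpoly

private lemma image_oEF {n m : ℕ} (S : Finset (Fin n)) (h : S.card = m) :
    Finset.image (S.orderEmbOfFin h) Finset.univ = S := by
  apply Finset.coe_injective
  rw [Finset.coe_image, Finset.coe_univ, Set.image_univ]
  exact Finset.range_orderEmbOfFin S h

private lemma qc_eq {n m : ℕ} (M : Matrix (Fin n) (Fin n) ℂ) {f : Fin m → Fin n}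
    (hf : Function.Injective f) :
    (M.submatrix f f).charpoly = qc M (Finset.image f Finset.univ) := by
  apply bridge M hf ((Finset.image f Finset.univ).orderEmbOfFin rfl).injective
  rw [image_oEF]

private lemma facet {n m : ℕ} (M : Matrix (Fin n) (Fin n) ℂ) (S : Finset (Fin n))
    (hS : S.card = m + 1) :
    derivative (qc M S) = ∑ a ∈ S, qc M (S.erase a) := by
  set f := S.orderEmbOfFin hS with hfdef
  have hq : qc M S = (M.submatrix f f).charpoly := by
    rw [qc_eq M f.injective, image_oEF]
  rw [hq, derivCharpoly]
  have hterm : ∀ i : Fin (m+1),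
      ((M.submatrix f f).submatrix i.succAbove i.succAbove).charpoly = qc M (S.erase (f i)) := by
    intro i
    rw [Matrix.submatrix_submatrix]
    have hinj : Function.Injective (f ∘ i.succAbove) :=
      f.injective.comp Fin.succAbove_right_injective
    rw [qc_eq M hinj]
    congr 1
    apply Finset.eq_of_subset_of_card_le
    · intro x hx
      obtain ⟨j, _, rfl⟩ := Finset.mem_image.mp hx
      refine Finset.mem_erase.mpr ⟨fun hc => ?_, Finset.orderEmbOfFin_mem S hS _⟩
      exact Fin.succAbove_ne i j (f.injective hc)
    · rw [Finset.card_erase_of_mem (Finset.orderEmbOfFin_mem S hS i), hS,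
        Finset.card_image_of_injective _ hinj]
      simp
  simp_rw [hterm]
  rw [show S = Finset.image f Finset.univ from (image_oEF S hS).symm, Finset.sum_image
    (fun i _ j _ h => f.injective h)]

private lemma doubleCount {α : Type*} [DecidableEq α] (K : Finset α) (m : ℕ)
    (q : Finset α → Polynomial ℂ) :
    ∑ W ∈ K.powersetCard (m+1), ∑ a ∈ W, q (W.erase a)
      = (K.card - m) • ∑ L ∈ K.powersetCard m, q L := by
  have hRHS : (K.card - m) • ∑ L ∈ K.powersetCard m, q L
      = ∑ L ∈ K.powersetCard m, ∑ _a ∈ K \ L, q L := by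
    rw [Finset.smul_sum]
    apply Finset.sum_congr rfl
    intro L hL
    obtain ⟨hLK, hLc⟩ := Finset.mem_powersetCard.mp hL
    rw [Finset.sum_const, Finset.card_sdiff_of_subset hLK, hLc]
  rw [hRHS, Finset.sum_sigma', Finset.sum_sigma']
  refine Finset.sum_nbij' (fun x => ⟨x.1.erase x.2, x.2⟩) (fun y => ⟨insert y.2 y.1, y.2⟩)
    ?_ ?_ ?_ ?_ ?_
  · rintro ⟨W, a⟩ hx
    rw [Finset.mem_sigma] at hx ⊢
    obtain ⟨hW, ha⟩ := hx
    obtain ⟨hWK, hWc⟩ := Finset.mem_powersetCard.mp hW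
    refine ⟨Finset.mem_powersetCard.mpr ⟨(Finset.erase_subset _ _).trans hWK, ?_⟩, ?_⟩
    · rw [Finset.card_erase_of_mem ha, hWc]; rfl
    · exact Finset.mem_sdiff.mpr ⟨hWK ha, Finset.notMem_erase _ _⟩
  · rintro ⟨L, b⟩ hy
    rw [Finset.mem_sigma] at hy ⊢
    obtain ⟨hL, hb⟩ := hy
    obtain ⟨hLK, hLc⟩ := Finset.mem_powersetCard.mp hL
    obtain ⟨hbK, hbL⟩ := Finset.mem_sdiff.mp hb
    refine ⟨Finset.mem_powersetCard.mpr ⟨Finset.insert_subset hbK hLK, ?_⟩,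
      Finset.mem_insert_self _ _⟩
    rw [Finset.card_insert_of_notMem hbL, hLc]
  · rintro ⟨W, a⟩ hx
    rw [Finset.mem_sigma] at hx
    simp [Finset.insert_erase hx.2]
  · rintro ⟨L, b⟩ hy
    rw [Finset.mem_sigma] at hy
    obtain ⟨_, hb⟩ := hy
    simp [Finset.erase_insert (Finset.mem_sdiff.mp hb).2]
  · rintro ⟨W, a⟩ _
    rfl

private lemma claimB {α : Type*} [DecidableEq α] :
    ∀ (m j : ℕ) (G : Finset α) (q : Finset α → Polynomial ℂ),
      m ≤ j → j + m ≤ G.card →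
      (∀ W ⊆ G, W.card = j → ∀ W' ⊆ G, W'.card = j →
        ∑ L ∈ W.powersetCard m, q L = ∑ L ∈ W'.powersetCard m, q L) →
      ∀ S ⊆ G, S.card = m → ∀ T ⊆ G, T.card = m → q S = q T := by
  intro m
  induction m with
  | zero =>
    intro j G q _ _ _ S _ hS T _ hT
    rw [Finset.card_eq_zero.mp hS, Finset.card_eq_zero.mp hT]
  | succ m ih =>
    intro j G q hmj hjG hq
    have hj1 : 1 ≤ j := le_trans (Nat.succ_le_succ (Nat.zero_le m)) hmj
    have swap : ∀ (a b : α) (U : Finset α), U ⊆ G → a ∈ G → b ∈ G → a ∉ U → b ∉ U →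
        U.card = m → q (insert a U) = q (insert b U) := by
      intro a b U hUG haG hbG haU hbU hU
      by_cases hab : a = b
      · rw [hab]
      set G' := G \ {a, b} with hG'
      set D : Finset α → Polynomial ℂ := fun V => q (insert a V) - q (insert b V) with hD
      have hzero : ∀ W ⊆ G', W.card = j - 1 → ∑ V ∈ W.powersetCard m, D V = 0 := by
        intro W hWG' hWc
        have haW : a ∉ W := fun h => by
          have := hWG' h; rw [hG', Finset.mem_sdiff] at this
          exact this.2 (by simp)
        have hbW : b ∉ W := fun h => by
          have := hWG' h; rw [hG', Finset.mem_sdiff] at this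
          exact this.2 (by simp)
        have hWG : W ⊆ G := hWG'.trans (Finset.sdiff_subset)
        have h1 : insert a W ⊆ G := Finset.insert_subset haG hWG
        have h2 : insert b W ⊆ G := Finset.insert_subset hbG hWG
        have hcard : (insert a W).card = j := by
          rw [Finset.card_insert_of_notMem haW, hWc, Nat.sub_add_cancel hj1]
        have hcard' : (insert b W).card = j := by
          rw [Finset.card_insert_of_notMem hbW, hWc, Nat.sub_add_cancel hj1]
        have key := hq _ h1 hcard _ h2 hcard'
        have hdisj : ∀ c : α, c ∉ W →
            Disjoint (W.powersetCard (m+1)) ((W.powersetCard m).image (insert c)) := by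
          intro c hc
          rw [Finset.disjoint_left]
          rintro X hX hX2
          obtain ⟨V, hV, rfl⟩ := Finset.mem_image.mp hX2
          exact hc ((Finset.mem_powersetCard.mp hX).1 (Finset.mem_insert_self c V))
        have hinj : ∀ c : α, c ∉ W → ∀ V ∈ W.powersetCard m, ∀ V' ∈ W.powersetCard m,
            insert c V = insert c V' → V = V' := by
          intro c hc V hV V' hV' hVV
          have hcV : c ∉ V := fun h => hc ((Finset.mem_powersetCard.mp hV).1 h)
          have hcV' : c ∉ V' := fun h => hc ((Finset.mem_powersetCard.mp hV').1 h)
          rw [← Finset.erase_insert hcV, ← Finset.erase_insert hcV', hVV]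
        rw [Finset.powersetCard_succ_insert haW, Finset.powersetCard_succ_insert hbW,
          Finset.sum_union (hdisj a haW), Finset.sum_union (hdisj b hbW),
          Finset.sum_image (hinj a haW), Finset.sum_image (hinj b hbW)] at key
        have key2 := add_left_cancel key
        rw [hD, Finset.sum_sub_distrib, key2, sub_self]
      have hG'c2 : G.card - 2 ≤ G'.card := by
        calc G.card - 2 ≤ G.card - ({a, b} : Finset α).card := by
              apply Nat.sub_le_sub_left
              exact le_trans (Finset.card_insert_le _ _) (by simp)
          _ ≤ G'.card := Finset.le_card_sdiff _ _
      have hG'c : j - 1 + m ≤ G'.card := by omega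
      have hcons := ih (j - 1) G' D (by omega) hG'c
        (fun W hW hWc W' hW' hWc' => by rw [hzero W hW hWc, hzero W' hW' hWc'])
      obtain ⟨W₀, hW₀G', hW₀c⟩ := Finset.exists_subset_card_eq
        (show j - 1 ≤ G'.card by omega)
      have hUG' : U ⊆ G' := by
        intro x hx
        rw [hG', Finset.mem_sdiff]
        refine ⟨hUG hx, ?_⟩
        simp only [Finset.mem_insert, Finset.mem_singleton]
        rintro (rfl | rfl)
        · exact haU hx
        · exact hbU hx
      have hterms : ∀ V ∈ W₀.powersetCard m, D V = D U := by
        intro V hV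
        obtain ⟨hVW, hVc⟩ := Finset.mem_powersetCard.mp hV
        exact hcons V (hVW.trans hW₀G') hVc U hUG' hU
      have hsum := hzero W₀ hW₀G' hW₀c
      rw [Finset.sum_congr rfl hterms, Finset.sum_const] at hsum
      have hpos : 0 < (W₀.powersetCard m).card := by
        rw [Finset.card_powersetCard, hW₀c]
        exact Nat.choose_pos (by omega)
      have hDU : D U = 0 := by
        rw [← Nat.cast_smul_eq_nsmul ℂ] at hsum
        rcases smul_eq_zero.mp hsum with h | h
        · exact absurd h (by exact_mod_cast hpos.ne')
        · exact h
      exact sub_eq_zero.mp hDU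
    have chain : ∀ d : ℕ, ∀ S, S ⊆ G → S.card = m + 1 → ∀ T, T ⊆ G → T.card = m + 1 →
        (S \ T).card ≤ d → q S = q T := by
      intro d
      induction d with
      | zero =>
        intro S hSG hS T hTG hT hd
        have h0 : S \ T = ∅ := Finset.card_eq_zero.mp (Nat.le_zero.mp hd)
        have hST : S ⊆ T := Finset.sdiff_eq_empty_iff_subset.mp h0
        rw [Finset.eq_of_subset_of_card_le hST (le_of_eq (hT.trans hS.symm))]
      | succ d ihd =>
        intro S hSG hS T hTG hT hd
        by_cases hST : S = T
        · rw [hST]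
        have hSTne : (S \ T).Nonempty := by
          rw [Finset.sdiff_nonempty]
          intro hsub
          exact hST (Finset.eq_of_subset_of_card_le hsub (le_of_eq (hT.trans hS.symm)))
        obtain ⟨a, haST⟩ := hSTne
        have hTSne : (T \ S).Nonempty := by
          rw [← Finset.card_pos, ← Finset.card_sdiff_comm (hS.trans hT.symm)]
          exact Finset.card_pos.mpr ⟨a, haST⟩
        obtain ⟨b, hbTS⟩ := hTSne
        obtain ⟨haS, haT⟩ := Finset.mem_sdiff.mp haST
        obtain ⟨hbT, hbS⟩ := Finset.mem_sdiff.mp hbTS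
        have hbSe : b ∉ S.erase a := fun h => hbS (Finset.erase_subset _ _ h)
        set S' := insert b (S.erase a) with hS'
        have h1 : q S = q S' := by
          conv_lhs => rw [← Finset.insert_erase haS]
          exact swap a b (S.erase a) ((Finset.erase_subset _ _).trans hSG) (hSG haS)
            (hTG hbT) (Finset.notMem_erase _ _) hbSe
            (by rw [Finset.card_erase_of_mem haS, hS]; rfl)
        have hS'G : S' ⊆ G :=
          Finset.insert_subset (hTG hbT) ((Finset.erase_subset _ _).trans hSG)
        have hS'c : S'.card = m + 1 := by
          rw [hS', Finset.card_insert_of_notMem hbSe, Finset.card_erase_of_mem haS, hS]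
          rfl
        have hd' : (S' \ T).card ≤ d := by
          have hssd : S' \ T = (S \ T).erase a := by
            ext x
            simp only [hS', Finset.mem_sdiff, Finset.mem_erase, Finset.mem_insert]
            constructor
            · rintro ⟨rfl | ⟨hxa, hxS⟩, hxT⟩
              · exact absurd hbT hxT
              · exact ⟨hxa, hxS, hxT⟩
            · rintro ⟨hxa, hxS, hxT⟩
              exact ⟨Or.inr ⟨hxa, hxS⟩, hxT⟩
          rw [hssd, Finset.card_erase_of_mem haST]
          omega
        rw [h1]
        exact ihd S' hS'G hS'c T hTG hT hd'
    intro S hSG hS T hTG hT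
    exact chain (S \ T).card S hSG hS T hTG hT le_rfl


/-- `M` is `k`-spectrally monomorphic: all `k × k` principal submatrices of `M`
have the same characteristic polynomial. -/
def SpecMono {n : ℕ} (k : ℕ) (M : Matrix (Fin n) (Fin n) ℂ) : Prop :=
  ∀ f g : Fin k → Fin n, Function.Injective f → Function.Injective g →
    (M.submatrix f f).charpoly = (M.submatrix g g).charpoly

theorem stmt_6 (n k : ℕ) (M : Matrix (Fin n) (Fin n) ℂ) (hM : SpecMono k M)
    (l : ℕ) (hl1 : 1 ≤ l) (hl : l ≤ min k (n - k)) :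
    SpecMono l M := by
  have hlk : l ≤ k := le_trans hl (min_le_left _ _)
  have hlnk : l ≤ n - k := le_trans hl (min_le_right _ _)
  have hkl : k + l ≤ n := by omega
  have Rconst : ∀ d m : ℕ, m + d = k → ∀ K : Finset (Fin n), K.card = k →
      ∀ K' : Finset (Fin n), K'.card = k →
      ∑ L ∈ K.powersetCard m, qc M L = ∑ L ∈ K'.powersetCard m, qc M L := by
    intro d
    induction d with
    | zero =>
      intro m hm K hK K' hK'
      have e1 : K.powersetCard m = {K} := by
        rw [show m = K.card by omega]; exact Finset.powersetCard_self K
      have e2 : K'.powersetCard m = {K'} := by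
        rw [show m = K'.card by omega]; exact Finset.powersetCard_self K'
      rw [e1, e2, Finset.sum_singleton, Finset.sum_singleton]
      have h1 : qc M K = (M.submatrix (K.orderEmbOfFin hK) (K.orderEmbOfFin hK)).charpoly := by
        rw [qc_eq M (K.orderEmbOfFin hK).injective, image_oEF]
      have h2 : qc M K' = (M.submatrix (K'.orderEmbOfFin hK') (K'.orderEmbOfFin hK')).charpoly := by
        rw [qc_eq M (K'.orderEmbOfFin hK').injective, image_oEF]
      rw [h1, h2]
      exact hM _ _ (K.orderEmbOfFin hK).injective (K'.orderEmbOfFin hK').injective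
    | succ d ihd =>
      intro m hm K hK K' hK'
      have h := ihd (m + 1) (by omega) K hK K' hK'
      have hder := congrArg derivative h
      rw [map_sum, map_sum,
        Finset.sum_congr rfl (fun W hW => facet M W (Finset.mem_powersetCard.mp hW).2),
        Finset.sum_congr rfl (fun W hW => facet M W (Finset.mem_powersetCard.mp hW).2),
        doubleCount, doubleCount, hK, hK'] at hder
      rw [← Nat.cast_smul_eq_nsmul ℂ, ← Nat.cast_smul_eq_nsmul ℂ] at hder
      exact smul_right_injective _ (show ((k - m : ℕ) : ℂ) ≠ 0 by
        exact_mod_cast (show k - m ≠ 0 by omega)) hder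
  intro f g hf hg
  have hS : (Finset.image f Finset.univ).card = l := by
    rw [Finset.card_image_of_injective _ hf, Finset.card_univ, Fintype.card_fin]
  have hT : (Finset.image g Finset.univ).card = l := by
    rw [Finset.card_image_of_injective _ hg, Finset.card_univ, Fintype.card_fin]
  have main := claimB l k (Finset.univ : Finset (Fin n)) (qc M) hlk
    (by rw [Finset.card_univ, Fintype.card_fin]; omega)
    (fun W _ hW W' _ hW' => Rconst (k - l) l (by omega) W hW W' hW')
    (Finset.image f Finset.univ) (Finset.subset_univ _) hS
    (Finset.image g Finset.univ) (Finset.subset_univ _) hT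
  rw [qc_eq M hf, qc_eq M hg]
  exact main
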